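/- Let (D, σ) be a measure space with σ(D) < ∞ and let C > 0, β > 0, λ > 0. Let q : (0,∞) × D × D → ℝ be such that for every t > 0 and θ ∈ D the function η ↦ q(t,θ,η) is measurable and |q(t,θ,η)| ≤ C t^{-β} for all t > 0 and θ, η ∈ D. Let m : D → ℝ be measurable with ∫_D m² dσ = 1, and suppose that for every t > 0 and every θ ∈ D one has m(θ) = e^{λ t} ∫_D q(t,θ,η) m(η) dσ(η). Then sup_{θ ∈ D} |m(θ)| ≤ e · C · σ(D)^{1/2} · λ^β. -/

import Mathlib

open MeasureTheory Real

/-- Eigenfunction sup-norm bound: if `m` is L²(σ)-normalized and satisfies the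
eigenfunction identity `m θ = e^{λ t} ∫ q(t,θ,η) m(η) dσ(η)` for all `t > 0`,
where the kernel `q` satisfies `|q(t,θ,η)| ≤ C t^{-β}`, then
`|m(θ)| ≤ e · C · σ(D)^{1/2} · λ^β` for every `θ`. -/
theorem stmt1
    {D : Type*} [MeasurableSpace D] (σ : Measure D) [IsFiniteMeasure σ]
    (C β lam : ℝ) (hC : 0 < C) (hβ : 0 < β) (hlam : 0 < lam)
    (q : ℝ → D → D → ℝ)
    (hqmeas : ∀ t : ℝ, 0 < t → ∀ θ : D, Measurable (fun η => q t θ η))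
    (hqbound : ∀ t : ℝ, 0 < t → ∀ θ η : D, |q t θ η| ≤ C * t ^ (-β))
    (m : D → ℝ) (hm : Measurable m)
    (hnorm : ∫ θ, (m θ) ^ 2 ∂σ = 1)
    (heigen : ∀ t : ℝ, 0 < t → ∀ θ : D,
      m θ = Real.exp (lam * t) * ∫ η, q t θ η * m η ∂σ) :
    ∀ θ : D, |m θ| ≤ Real.exp 1 * C * ((σ Set.univ).toReal) ^ ((1 : ℝ) / 2) * lam ^ β := by
  -- m² is integrable, hence m ∈ L², hence m is integrable
  have hmsq : Integrable (fun θ => m θ ^ 2) σ := integrable_of_integral_eq_one hnorm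
  have hm2 : MemLp m 2 σ := (memLp_two_iff_integrable_sq hm.aestronglyMeasurable).2 hmsq
  have hm1 : Integrable m σ := hm2.integrable (by norm_num)
  have hmabs : Integrable (fun η => |m η|) σ := hm1.abs
  set I : ℝ := ∫ η, |m η| ∂σ with hI
  have hInn : 0 ≤ I := integral_nonneg fun η => abs_nonneg _
  -- Cauchy–Schwarz: ∫ |m| ≤ σ(D)^{1/2}
  have hCS : I ≤ ((σ Set.univ).toReal) ^ ((1 : ℝ) / 2) := by
    have hconj : Real.HolderConjugate 2 2 := by
      rw [Real.holderConjugate_iff_eq_conjExponent] <;> norm_num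
    have h1 : MemLp (fun _ : D => (1 : ℝ)) (ENNReal.ofReal 2) σ := by
      simpa using memLp_const (μ := σ) (1 : ℝ)
    have h2 : MemLp (fun η => |m η|) (ENNReal.ofReal 2) σ := by
      have : MemLp (fun η => |m η|) 2 σ := by simpa [Real.norm_eq_abs] using hm2.norm
      simpa using this
    have := integral_mul_le_Lp_mul_Lq_of_nonneg hconj
      (f := fun _ : D => (1 : ℝ)) (g := fun η => |m η|)
      (Filter.Eventually.of_forall fun _ => zero_le_one)
      (Filter.Eventually.of_forall fun η => abs_nonneg _) h1 h2
    have habs2 : ∫ η, |m η| ^ (2 : ℝ) ∂σ = 1 := by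
      rw [← hnorm]
      refine integral_congr_ae (Filter.Eventually.of_forall fun η => ?_)
      show |m η| ^ (2 : ℝ) = m η ^ 2
      rw [show (2 : ℝ) = ((2 : ℕ) : ℝ) by norm_num, Real.rpow_natCast, sq_abs]
    have hone : ∫ _η, (1 : ℝ) ^ (2 : ℝ) ∂σ = (σ Set.univ).toReal := by simp [Measure.real]
    rw [habs2, hone] at this
    simpa using this
  intro θ
  set t : ℝ := lam⁻¹ with htdef
  have ht : 0 < t := inv_pos.2 hlam
  have hlamt : lam * t = 1 := mul_inv_cancel₀ hlam.ne'
  have htβ : t ^ (-β) = lam ^ β := by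
    rw [htdef, Real.inv_rpow hlam.le, Real.rpow_neg hlam.le, inv_inv]
  -- integrability of the integrand
  have hqmint : Integrable (fun η => q t θ η * m η) σ :=
    hm1.bdd_mul (hqmeas t ht θ).aestronglyMeasurable
      (c := C * t ^ (-β)) (Filter.Eventually.of_forall fun η => by simpa [Real.norm_eq_abs] using hqbound t ht θ η)
  have hkey : |∫ η, q t θ η * m η ∂σ| ≤ C * lam ^ β * I := by
    calc |∫ η, q t θ η * m η ∂σ| ≤ ∫ η, |q t θ η| * |m η| ∂σ := by
          simpa [Real.norm_eq_abs, abs_mul] using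
            norm_integral_le_integral_norm (μ := σ) (fun η => q t θ η * m η)
      _ ≤ ∫ η, (C * t ^ (-β)) * |m η| ∂σ := by
          refine integral_mono (by simpa [abs_mul] using hqmint.abs) (hmabs.const_mul _)
            fun η => mul_le_mul_of_nonneg_right (hqbound t ht θ η) (abs_nonneg _)
      _ = C * t ^ (-β) * I := integral_const_mul _ _
      _ = C * lam ^ β * I := by rw [htβ]
  have hexp : Real.exp (lam * t) = Real.exp 1 := by rw [hlamt]
  have hmθ := heigen t ht θ
  rw [hmθ, abs_mul, abs_of_pos (Real.exp_pos _), hexp]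
  calc Real.exp 1 * |∫ η, q t θ η * m η ∂σ|
      ≤ Real.exp 1 * (C * lam ^ β * I) :=
        mul_le_mul_of_nonneg_left hkey (Real.exp_pos 1).le
    _ ≤ Real.exp 1 * (C * lam ^ β * ((σ Set.univ).toReal) ^ ((1 : ℝ) / 2)) := by
        have hpos : 0 ≤ C * lam ^ β := by positivity
        exact mul_le_mul_of_nonneg_left (mul_le_mul_of_nonneg_left hCS hpos)
          (Real.exp_pos 1).le
    _ = Real.exp 1 * C * ((σ Set.univ).toReal) ^ ((1 : ℝ) / 2) * lam ^ β := by ring
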